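/- The number of join-irreducible elements of the dominance lattice of partitions of n grows as Θ(n²); specifically, it equals n²/6 + O(n). -/

import Mathlib

def IsPartition (n : ℕ) (a : ℕ → ℕ) : Prop :=
  (∀ i j, i ≤ j → a j ≤ a i) ∧ (∑ i ∈ Finset.range n, a i = n) ∧ (∀ i, n ≤ i → a i = 0)

def Dom (a b : ℕ → ℕ) : Prop :=
  ∀ j, ∑ i ∈ Finset.range j, a i ≤ ∑ i ∈ Finset.range j, b i

def IsSupOf (n : ℕ) (a b c : ℕ → ℕ) : Prop :=
  IsPartition n c ∧ Dom a c ∧ Dom b c ∧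
    ∀ d, IsPartition n d → Dom a d → Dom b d → Dom c d

def IsInfOf (n : ℕ) (a b c : ℕ → ℕ) : Prop :=
  IsPartition n c ∧ Dom c a ∧ Dom c b ∧
    ∀ d, IsPartition n d → Dom d a → Dom d b → Dom d c

/-- The minimum partition (1,1,…,1) of n. -/
def ones (n : ℕ) : ℕ → ℕ := fun i => if i < n then 1 else 0

/-- A partition of n is join-irreducible in the dominance lattice: it is not
the minimum and whenever it is the join of two partitions it equals one of them. -/
def JoinIrr (n : ℕ) (a : ℕ → ℕ) : Prop :=
  IsPartition n a ∧ a ≠ ones n ∧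
    ∀ b c, IsPartition n b → IsPartition n c → IsSupOf n b c a → a = b ∨ a = c

set_option linter.unusedVariables false
set_option linter.unusedSectionVars false
set_option maxHeartbeats 1000000

namespace JI

/-- prefix sums -/
def S (a : ℕ → ℕ) (j : ℕ) : ℕ := ∑ i ∈ Finset.range j, a i

lemma S_succ (a : ℕ → ℕ) (j : ℕ) : S a (j+1) = S a j + a j := Finset.sum_range_succ a j

lemma S_zero (a : ℕ → ℕ) : S a 0 = 0 := rfl

lemma S_mono (a : ℕ → ℕ) {i j : ℕ} (h : i ≤ j) : S a i ≤ S a j := by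
  unfold S
  exact Finset.sum_le_sum_of_subset (Finset.range_subset_range.2 h)

lemma dom_iff {a b : ℕ → ℕ} : Dom a b ↔ ∀ j, S a j ≤ S b j := Iff.rfl

section basic
variable {n : ℕ} {a : ℕ → ℕ} (ha : IsPartition n a)
include ha

lemma part_mono {i j : ℕ} (h : i ≤ j) : a j ≤ a i := ha.1 i j h

lemma part_S_n : S a n = n := ha.2.1

lemma part_S_ge {j : ℕ} (h : n ≤ j) : S a j = n := by
  induction j with
  | zero => exact (Nat.le_zero.1 h) ▸ ha.2.1
  | succ m ih =>
    rcases Nat.lt_or_ge n (m+1) with h' | h'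
    · have hm : n ≤ m := Nat.lt_succ_iff.1 h'
      rw [S_succ, ih hm, ha.2.2 m hm]
      omega
    · have : n = m + 1 := le_antisymm h h'
      rw [← this]; exact ha.2.1

lemma part_S_le (j : ℕ) : S a j ≤ n := by
  rcases Nat.le_total j n with h | h
  · calc S a j ≤ S a n := S_mono a h
    _ = n := ha.2.1
  · exact le_of_eq (part_S_ge ha h)

/-- concavity of prefix sums -/
lemma S_concave (j : ℕ) : S a j + S a (j+2) ≤ 2 * S a (j+1) := by
  have h1 : S a (j+1) = S a j + a j := S_succ a j
  have h2 : S a (j+2) = S a j + a j + a (j+1) := by rw [S_succ, h1]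
  have := ha.1 j (j+1) (Nat.le_succ j)
  omega

lemma part_le_sum {i : ℕ} (hi : i < n) : a i ≤ n := by
  have h1 : a i ≤ S a n := by
    unfold S
    exact Finset.single_le_sum (fun k _ => Nat.zero_le _) (Finset.mem_range.2 hi)
  have h2 : S a n = n := ha.2.1
  omega

lemma part_eq_of_S_eq {b : ℕ → ℕ} (hb : IsPartition n b) (h : ∀ j, S a j = S b j) :
    a = b := by
  funext i
  have h1 := h (i+1); have h2 := h i
  have ha' := S_succ a i; have hb' := S_succ b i
  omega

/-- partitions dominate ones -/
lemma dom_ones : Dom (ones n) a := by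
  intro j
  have hones : ∀ k, S (ones n) k = min k n := by
    intro k
    induction k with
    | zero => simp [S_zero]
    | succ m ih =>
      rw [S_succ, ih]
      unfold ones
      rcases Nat.lt_or_ge m n with h | h
      · simp [h]; omega
      · simp [Nat.not_lt.2 h]; omega
  show S (ones n) j ≤ S a j
  rw [hones j]
  show min j n ≤ S a j
  rcases Nat.le_total n j with h | h
  · rw [part_S_ge ha h]; omega
  · -- j ≤ n
    rcases Nat.eq_zero_or_pos (a (j-1)) with h0 | h0
    · -- a vanishes from j-1 on; S a j = n
      rcases Nat.eq_zero_or_pos j with rfl | hj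
      · simp [S_zero]
      have hz : ∀ i, j - 1 ≤ i → a i = 0 := fun i hi =>
        Nat.le_zero.1 (h0 ▸ ha.1 (j-1) i hi)
      have : S a j = S a (max n j) := by
        have hsub : Finset.range j ⊆ Finset.range (max n j) :=
          Finset.range_subset_range.2 (le_max_right _ _)
        unfold S
        exact Finset.sum_subset hsub (fun x _ hx => hz x (by simp at hx; omega))
      rw [this, part_S_ge ha (le_max_left _ _)]
      omega
    · -- all of a 0 .. a (j-1) ≥ 1
      have : j ≤ S a j := by
        have : ∀ i ∈ Finset.range j, 1 ≤ a i := by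
          intro i hi
          simp at hi
          exact le_trans h0 (ha.1 i (j-1) (by omega))
        calc j = ∑ _i ∈ Finset.range j, 1 := by simp
        _ ≤ S a j := Finset.sum_le_sum this
      omega

end basic

lemma ones_isPartition (n : ℕ) : IsPartition n (ones n) := by
  refine ⟨?_, ?_, ?_⟩
  · intro i j hij
    unfold ones
    split <;> split <;> omega
  · unfold ones
    rw [Finset.sum_ite_of_true (by intro i hi; simpa using Finset.mem_range.1 hi)]
    simp
  · intro i hi; unfold ones; simp; omega

/-- if a partition has all parts ≤ 1 it is `ones` -/
lemma eq_ones_of_le_one {n : ℕ} {a : ℕ → ℕ} (ha : IsPartition n a) (h : a 0 ≤ 1) :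
    a = ones n := by
  apply part_eq_of_S_eq ha (ones_isPartition n)
  have h1 : ∀ i, a i ≤ 1 := fun i => le_trans (ha.1 0 i (Nat.zero_le _)) h
  -- S a j ≤ j, and S a j ≥ min j n by dom_ones; also S a j ≤ n
  intro j
  have hle : S a j ≤ j := by
    calc S a j ≤ ∑ _i ∈ Finset.range j, 1 := Finset.sum_le_sum (fun i _ => h1 i)
    _ = j := by simp
  have hge : S (ones n) j ≤ S a j := dom_ones ha j
  have hones : S (ones n) j ≤ min j n := by
    have : S (ones n) j ≤ j := by
      calc S (ones n) j ≤ ∑ _i ∈ Finset.range j, 1 :=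
        Finset.sum_le_sum (fun i _ => by unfold ones; split <;> omega)
      _ = j := by simp
    have := part_S_le (ones_isPartition n) (j := j)
    omega
  have h2 := part_S_le ha (j := j)
  have h3 : min j n ≤ S (ones n) j := by
    rcases Nat.le_total n j with h' | h'
    · rw [part_S_ge (ones_isPartition n) h']; omega
    · -- j ≤ n : S ones j = j
      have : S (ones n) j = j := by
        unfold S ones
        rw [Finset.sum_ite_of_true (by intro i hi; simp at hi; omega)]
        simp
      omega
  omega

lemma S_def : ∀ (a : ℕ → ℕ) (j : ℕ), S a j = ∑ i ∈ Finset.range j, a i := fun _ _ => rfl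

lemma dom_refl (a : ℕ → ℕ) : Dom a a := fun _ => le_refl _
lemma dom_trans {a b c : ℕ → ℕ} (h1 : Dom a b) (h2 : Dom b c) : Dom a c :=
  fun j => le_trans (h1 j) (h2 j)

lemma dom_antisymm {n : ℕ} {a b : ℕ → ℕ} (ha : IsPartition n a) (hb : IsPartition n b)
    (h1 : Dom a b) (h2 : Dom b a) : a = b := by
  apply part_eq_of_S_eq ha hb
  intro j
  have := dom_iff.1 h1 j
  have := dom_iff.1 h2 j
  omega

/-- the set of partitions of n is finite -/
lemma finite_partitions (n : ℕ) : {x : ℕ → ℕ | IsPartition n x}.Finite := by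
  classical
  have : {x : ℕ → ℕ | IsPartition n x} ⊆
      Set.range (fun (f : Fin n → Fin (n+1)) => fun i => if h : i < n then (f ⟨i, h⟩ : ℕ) else 0) := by
    intro x hx
    refine ⟨fun i => ⟨x i, Nat.lt_succ_of_le (part_le_sum hx i.2)⟩, ?_⟩
    funext i
    by_cases h : i < n
    · simp [h]
    · simp [h]; exact (hx.2.2 i (Nat.not_lt.1 h)).symm
  exact Set.Finite.subset (Set.finite_range _) this

/-- meet of two partitions -/
noncomputable def meetF (u v : ℕ → ℕ) : ℕ → ℕ :=
  fun i => min (S u (i+1)) (S v (i+1)) - min (S u i) (S v i)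

lemma S_meet {n : ℕ} {u v : ℕ → ℕ} (hu : IsPartition n u) (hv : IsPartition n v) (j : ℕ) :
    S (meetF u v) j = min (S u j) (S v j) := by
  induction j with
  | zero => simp [S_zero]
  | succ m ih =>
    rw [S_succ, ih]
    unfold meetF
    have h1 : S u m ≤ S u (m+1) := S_mono u (Nat.le_succ m)
    have h2 : S v m ≤ S v (m+1) := S_mono v (Nat.le_succ m)
    omega

lemma meet_isPartition {n : ℕ} {u v : ℕ → ℕ} (hu : IsPartition n u) (hv : IsPartition n v) :
    IsPartition n (meetF u v) := by
  have key : ∀ i j, i ≤ j → meetF u v j ≤ meetF u v i := by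
    have step : ∀ i, meetF u v (i+1) ≤ meetF u v i := by
      intro i
      show min (S u (i+2)) (S v (i+2)) - min (S u (i+1)) (S v (i+1)) ≤
        min (S u (i+1)) (S v (i+1)) - min (S u i) (S v i)
      have c1 := S_concave hu i; have c2 := S_concave hv i
      have h1 : S u i ≤ S u (i+1) := S_mono u (Nat.le_succ i)
      have h2 : S v i ≤ S v (i+1) := S_mono v (Nat.le_succ i)
      have h3 : S u (i+1) ≤ S u (i+2) := S_mono u (Nat.le_succ _)
      have h4 : S v (i+1) ≤ S v (i+2) := S_mono v (Nat.le_succ _)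
      omega
    intro i j hij
    induction j with
    | zero =>
      have : i = 0 := by omega
      rw [this]
    | succ m ih =>
      rcases Nat.lt_or_ge i (m+1) with h | h
      · exact le_trans (step m) (ih (by omega))
      · have : i = m + 1 := by omega
        rw [this]
  refine ⟨key, ?_, ?_⟩
  · have := S_meet hu hv n
    rw [S_def] at this
    rw [this, part_S_n hu, part_S_n hv]; simp
  · intro i hi
    unfold meetF
    rw [part_S_ge hu (by omega : n ≤ i+1), part_S_ge hv (by omega : n ≤ i+1),
        part_S_ge hu hi, part_S_ge hv hi]
    simp

lemma meet_dom_left {n : ℕ} {u v : ℕ → ℕ} (hu : IsPartition n u) (hv : IsPartition n v) :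
    Dom (meetF u v) u :=
  dom_iff.2 fun j => by rw [S_meet hu hv]; exact min_le_left _ _

lemma meet_dom_right {n : ℕ} {u v : ℕ → ℕ} (hu : IsPartition n u) (hv : IsPartition n v) :
    Dom (meetF u v) v :=
  dom_iff.2 fun j => by rw [S_meet hu hv]; exact min_le_right _ _

lemma dom_meet {n : ℕ} {u v x : ℕ → ℕ} (hu : IsPartition n u) (hv : IsPartition n v)
    (h1 : Dom x u) (h2 : Dom x v) : Dom x (meetF u v) :=
  dom_iff.2 fun j => by
    rw [S_meet hu hv]
    exact le_min (dom_iff.1 h1 j) (dom_iff.1 h2 j)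

/-- in a finite set, above every element there is a maximal one -/
lemma exists_maximal (T : Set (ℕ → ℕ)) (hT : T.Finite) :
    ∀ (k : ℕ) (x : ℕ → ℕ), x ∈ T → ({y ∈ T | Dom x y}).ncard ≤ k →
    ∃ m ∈ T, Dom x m ∧ ∀ y ∈ T, Dom m y → Dom y m := by
  intro k
  induction k with
  | zero =>
    intro x hx hcard
    exfalso
    have : x ∈ {y ∈ T | Dom x y} := ⟨hx, dom_refl x⟩
    have hne : {y ∈ T | Dom x y}.Nonempty := ⟨x, this⟩
    have hfin : {y ∈ T | Dom x y}.Finite := hT.subset (fun y hy => hy.1)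
    have := (Set.ncard_pos hfin).2 hne
    omega
  | succ k ih =>
    intro x hx hcard
    by_cases h : ∀ y ∈ T, Dom x y → Dom y x
    · exact ⟨x, hx, dom_refl x, h⟩
    · push_neg at h
      obtain ⟨y, hyT, hxy, hnyx⟩ := h
      have hsub : {z ∈ T | Dom y z} ⊂ {z ∈ T | Dom x z} := by
        constructor
        · intro z hz; exact ⟨hz.1, dom_trans hxy hz.2⟩
        · intro hcon
          have : x ∈ {z ∈ T | Dom y z} := hcon ⟨hx, dom_refl x⟩
          exact hnyx this.2
      have hfin : {z ∈ T | Dom x z}.Finite := hT.subset (fun z hz => hz.1)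
      have hlt : {z ∈ T | Dom y z}.ncard < {z ∈ T | Dom x z}.ncard :=
        Set.ncard_lt_ncard hsub hfin
      obtain ⟨m, hmT, hym, hmax⟩ := ih y hyT (by omega)
      exact ⟨m, hmT, dom_trans hxy hym, hmax⟩

def HasMax (n : ℕ) (a : ℕ → ℕ) : Prop :=
  ∃ m, IsPartition n m ∧ Dom m a ∧ m ≠ a ∧
    ∀ x, IsPartition n x → Dom x a → x ≠ a → Dom x m

theorem joinIrr_iff {n : ℕ} {a : ℕ → ℕ} :
    JoinIrr n a ↔ IsPartition n a ∧ a ≠ ones n ∧ HasMax n a := by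
  constructor
  · rintro ⟨ha, hne, H⟩
    refine ⟨ha, hne, ?_⟩
    set T : Set (ℕ → ℕ) := {x | IsPartition n x ∧ Dom x a ∧ x ≠ a} with hTdef
    have hTfin : T.Finite := (finite_partitions n).subset (fun x hx => hx.1)
    have hones : ones n ∈ T := ⟨ones_isPartition n, dom_ones ha, fun h => hne h.symm⟩
    obtain ⟨b, hbT, _, hbmax⟩ :=
      exists_maximal T hTfin ({y ∈ T | Dom (ones n) y}).ncard (ones n) hones (le_refl _)
    by_cases hall : ∀ x ∈ T, Dom x b
    · exact ⟨b, hbT.1, hbT.2.1, hbT.2.2, fun x hx1 hx2 hx3 => hall x ⟨hx1, hx2, hx3⟩⟩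
    · exfalso
      push_neg at hall
      obtain ⟨c0, hc0T, hnc0b⟩ := hall
      obtain ⟨c, hcT, hc0c, hcmax⟩ :=
        exists_maximal T hTfin ({y ∈ T | Dom c0 y}).ncard c0 hc0T (le_refl _)
      have hncb : ¬ Dom c b := fun h => hnc0b (dom_trans hc0c h)
      -- show IsSupOf n b c a
      have hsup : IsSupOf n b c a := by
        refine ⟨ha, hbT.2.1, hcT.2.1, ?_⟩
        intro d hd hbd hcd
        set e := meetF a d with he
        have hePart : IsPartition n e := meet_isPartition ha hd
        have heda : Dom e a := meet_dom_left ha hd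
        have hbe : Dom b e := dom_meet ha hd hbT.2.1 hbd
        have hce : Dom c e := dom_meet ha hd hcT.2.1 hcd
        by_cases heq : e = a
        · -- S a ≤ S d
          refine dom_iff.2 fun j => ?_
          have h1 : S e j = min (S a j) (S d j) := S_meet ha hd j
          rw [heq] at h1
          omega
        · have heT : e ∈ T := ⟨hePart, heda, heq⟩
          have : Dom e b := hbmax e heT hbe
          exact absurd (dom_trans hce this) hncb
      rcases H b c hbT.1 hcT.1 hsup with h | h
      · exact hbT.2.2 h.symm
      · exact hcT.2.2 h.symm
  · rintro ⟨ha, hne, m, hm, hma, hmne, hmax⟩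
    refine ⟨ha, hne, ?_⟩
    intro b c hb hc hsup
    by_contra hcon
    push_neg at hcon
    have hbm : Dom b m := hmax b hb hsup.2.1 (fun h => hcon.1 h.symm)
    have hcm : Dom c m := hmax c hc hsup.2.2.1 (fun h => hcon.2 h.symm)
    have ham : Dom a m := hsup.2.2.2 m hm hbm hcm
    exact hmne (dom_antisymm hm ha hma ham)

lemma mono_of_step {f : ℕ → ℕ} (h : ∀ i, f (i+1) ≤ f i) : ∀ i j, i ≤ j → f j ≤ f i := by
  intro i j hij
  induction j with
  | zero =>
    have h0 : i = 0 := by omega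
    rw [h0]
  | succ m ih =>
    rcases Nat.lt_or_ge i (m+1) with h' | h'
    · exact le_trans (h m) (ih (by omega))
    · have : i = m + 1 := by omega
      rw [this]

/-- S as a sum over an interval -/
lemma S_Ico (x : ℕ → ℕ) {L t : ℕ} (h : L ≤ t) :
    S x t = S x L + ∑ i ∈ Finset.Ico L t, x i := by
  rw [S_def, S_def, Finset.range_eq_Ico, Finset.range_eq_Ico]
  exact (Finset.sum_Ico_consecutive x (Nat.zero_le L) h).symm

/-! ### moves -/

def moveF (a : ℕ → ℕ) (i j : ℕ) : ℕ → ℕ :=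
  fun t => if t = i then a i - 1 else if t = j then a j + 1 else a t

def MoveOK (n : ℕ) (a : ℕ → ℕ) (i j : ℕ) : Prop :=
  i < j ∧ j < n ∧ a j + 2 ≤ a i ∧ (i + 1 < j → a (i+1) < a i ∧ a j < a (j-1))

lemma moveF_at_i {a : ℕ → ℕ} {i j : ℕ} (h : 1 ≤ a i) : moveF a i j i + 1 = a i := by
  unfold moveF; rw [if_pos rfl]; omega

lemma moveF_at_j {a : ℕ → ℕ} {i j : ℕ} (h : i ≠ j) : moveF a i j j = a j + 1 := by
  unfold moveF; rw [if_neg (Ne.symm h), if_pos rfl]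

lemma moveF_at {a : ℕ → ℕ} {i j t : ℕ} (h1 : t ≠ i) (h2 : t ≠ j) : moveF a i j t = a t := by
  unfold moveF; rw [if_neg h1, if_neg h2]

lemma S_move {n a i j} (h : MoveOK n a i j) (t : ℕ) :
    (i < t ∧ t ≤ j → S (moveF a i j) t + 1 = S a t) ∧
    (¬(i < t ∧ t ≤ j) → S (moveF a i j) t = S a t) := by
  obtain ⟨hij, hjn, hval, hmid⟩ := h
  induction t with
  | zero => exact ⟨fun ht => absurd ht.1 (by omega), fun _ => by rw [S_zero, S_zero]⟩
  | succ m ih =>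
    have hs1 := S_succ (moveF a i j) m
    have hs2 := S_succ a m
    by_cases hmi : m = i
    · subst hmi
      have hv := moveF_at_i (i := m) (j := j) (a := a) (by omega)
      have := ih.2 (by omega)
      exact ⟨fun _ => by omega, fun hn => by omega⟩
    · by_cases hmj : m = j
      · subst hmj
        have hv := moveF_at_j (i := i) (j := m) (a := a) (by omega)
        have := ih.1 ⟨by omega, by omega⟩
        exact ⟨fun ht => by omega, fun hn => by omega⟩
      · have hv := moveF_at (a := a) hmi hmj
        rcases Nat.lt_or_ge m i with hlt | hge
        · have := ih.2 (by omega)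
          exact ⟨fun ht => by omega, fun hn => by omega⟩
        · rcases Nat.lt_or_ge m j with hlt2 | hge2
          · have := ih.1 ⟨by omega, by omega⟩
            exact ⟨fun ht => by omega, fun hn => by omega⟩
          · have := ih.2 (by omega)
            exact ⟨fun ht => by omega, fun hn => by omega⟩

lemma move_isPartition {n a i j} (ha : IsPartition n a) (h : MoveOK n a i j) :
    IsPartition n (moveF a i j) := by
  obtain ⟨hij, hjn, hval, hmid⟩ := h
  refine ⟨mono_of_step ?_, ?_, ?_⟩
  · intro t
    by_cases hti : t = i
    · subst hti
      have e2 : moveF a t j t + 1 = a t := moveF_at_i (by omega)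
      by_cases h2 : t + 1 = j
      · have e1 : moveF a t j (t+1) = a j + 1 := by
          rw [h2]; exact moveF_at_j (i := t) (j := j) (a := a) (by omega)
        omega
      · have e1 : moveF a t j (t+1) = a (t+1) :=
          moveF_at (i := t) (j := j) (a := a) (by omega) h2
        have h3 : a (t+1) < a t := (hmid (by omega)).1
        omega
    · by_cases htj : t = j
      · subst htj
        have e2 : moveF a i t t = a t + 1 := moveF_at_j (i := i) (j := t) (a := a) (by omega)
        have e1 : moveF a i t (t+1) = a (t+1) :=
          moveF_at (i := i) (j := t) (a := a) (by omega) (by omega)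
        have h3 := ha.1 t (t+1) (by omega)
        omega
      · have e2 : moveF a i j t = a t := moveF_at (i := i) (j := j) (a := a) hti htj
        by_cases ht1i : t + 1 = i
        · have e1 : moveF a i j (t+1) = a i - 1 := by
            rw [ht1i]; unfold moveF; rw [if_pos rfl]
          have h3 : a i ≤ a t := by
            rw [← ht1i]; exact ha.1 t (t+1) (by omega)
          omega
        · by_cases ht1j : t + 1 = j
          · have e1 : moveF a i j (t+1) = a j + 1 := by
              rw [ht1j]; exact moveF_at_j (i := i) (j := j) (a := a) (by omega)
            have h3 : a j < a t := by
              have h4 := (hmid (by omega)).2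
              rwa [show j - 1 = t by omega] at h4
            omega
          · have e1 : moveF a i j (t+1) = a (t+1) :=
              moveF_at (i := i) (j := j) (a := a) ht1i ht1j
            have h3 := ha.1 t (t+1) (by omega)
            omega
  · have hs := (S_move ⟨hij, hjn, hval, hmid⟩ n).2 (by omega)
    rw [S_def, S_def] at hs
    rw [hs]
    exact ha.2.1
  · intro t ht
    have h2 := moveF_at (a := a) (i := i) (j := j) (t := t) (by omega) (by omega)
    rw [h2]
    exact ha.2.2 t ht

lemma move_dom {n a i j} (h : MoveOK n a i j) : Dom (moveF a i j) a := by
  refine dom_iff.2 fun t => ?_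
  by_cases ht : i < t ∧ t ≤ j
  · have := (S_move h t).1 ht; omega
  · have := (S_move h t).2 ht; omega

lemma move_ne {n a i j} (h : MoveOK n a i j) : moveF a i j ≠ a := by
  intro hc
  have h2 : moveF a i j i + 1 = a i := moveF_at_i (by have := h.2.2.1; omega)
  rw [hc] at h2
  omega

/-! ### forcing lemma -/

lemma forcing {x a : ℕ → ℕ} (hx : ∀ i j, i ≤ j → x j ≤ x i) (L K s : ℕ)
    (hvals : ∀ i, L ≤ i → i < K → s ≤ a i ∧ a i ≤ s + 1)
    (hdom : ∀ t, S x t ≤ S a t) (hL : S x L = S a L) (hK : S x K = S a K) :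
    ∀ t, L ≤ t → t ≤ K → S x t = S a t := by
  by_contra hcon
  push_neg at hcon
  obtain ⟨t1, hLt, htK, hne⟩ := hcon
  set B := (Finset.Ico L K).filter (fun t => S x t < S a t) with hB
  have hne' : t1 ∈ B := by
    simp only [hB, Finset.mem_filter, Finset.mem_Ico]
    have h1 := hdom t1
    have h2 : t1 < K := by
      rcases Nat.eq_or_lt_of_le htK with he | hlt
      · exfalso; rw [he] at hne; exact hne hK
      · exact hlt
    exact ⟨⟨hLt, h2⟩, by omega⟩
  have hBne : B.Nonempty := ⟨t1, hne'⟩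
  set j := B.max' hBne with hj
  have hjB : j ∈ B := B.max'_mem hBne
  simp only [hB, Finset.mem_filter, Finset.mem_Ico] at hjB
  obtain ⟨⟨hLj, hjK⟩, hjlt⟩ := hjB
  have hj1 : S x (j+1) = S a (j+1) := by
    rcases Nat.eq_or_lt_of_le (by omega : j + 1 ≤ K) with he | hlt
    · rw [he]; exact hK
    · by_contra hne2
      have : j + 1 ∈ B := by
        simp only [hB, Finset.mem_filter, Finset.mem_Ico]
        have := hdom (j+1)
        exact ⟨⟨by omega, hlt⟩, by omega⟩
      have := Finset.le_max' B (j+1) this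
      omega
  have hxj : s + 1 ≤ x j := by
    have h1 := S_succ x j
    have h2 := S_succ a j
    have h3 := (hvals j hLj hjK).1
    omega
  -- every x i for L ≤ i ≤ j is ≥ s+1, so S x j - S x L ≥ (j-L)(s+1) ≥ S a j - S a L
  have hsum1 : S x j = S x L + ∑ i ∈ Finset.Ico L j, x i := S_Ico x (by omega)
  have hsum2 : S a j = S a L + ∑ i ∈ Finset.Ico L j, a i := S_Ico a (by omega)
  have hge : ∑ i ∈ Finset.Ico L j, a i ≤ ∑ i ∈ Finset.Ico L j, x i := by
    refine Finset.sum_le_sum fun i hi => ?_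
    simp only [Finset.mem_Ico] at hi
    calc a i ≤ s + 1 := (hvals i hi.1 (by omega)).2
    _ ≤ x j := hxj
    _ ≤ x i := hx i j (by omega)
  omega

/-! ### reducibility from two moves -/

lemma no_hasMax {n : ℕ} {a : ℕ → ℕ} (ha : IsPartition n a) {i j i' j' : ℕ}
    (h1 : MoveOK n a i j) (h2 : MoveOK n a i' j')
    (hsep : j ≤ i' ∨ (j = i' + 1 ∧ a i' = a j + 1)) : ¬ HasMax n a := by
  rintro ⟨m, hm, hma, hmne, hmax⟩
  have hb := move_isPartition ha h1
  have hc := move_isPartition ha h2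
  have hbm : Dom (moveF a i j) m := hmax _ hb (move_dom h1) (move_ne h1)
  have hcm : Dom (moveF a i' j') m := hmax _ hc (move_dom h2) (move_ne h2)
  have key : ∀ t, S a t ≤ S m t := by
    intro t
    by_cases ht1 : i < t ∧ t ≤ j
    · by_cases ht2 : i' < t ∧ t ≤ j'
      · -- overlap: only possible in second case of hsep, and t = j
        rcases hsep with hd | ⟨he, hval⟩
        · omega
        · -- t = j = i' + 1
          obtain rfl : j = i' + 1 := he
          rw [show t = i' + 1 from by omega]
          have hcv := S_concave hm i'
          have hl : S a i' ≤ S m i' := by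
            have := (S_move h2 i').2 (by omega)
            have := dom_iff.1 hcm i'
            omega
          have hr : S a (i'+2) ≤ S m (i'+2) := by
            have h5 : S (moveF a i (i'+1)) (i'+2) = S a (i'+2) :=
              (S_move h1 (i'+2)).2 (by omega)
            have := dom_iff.1 hbm (i'+2)
            omega
          have e1 := S_succ a i'
          have e2 : S a (i'+2) = S a (i'+1) + a (i'+1) := S_succ a (i'+1)
          omega
      · have := (S_move h2 t).2 ht2
        have := dom_iff.1 hcm t
        omega
    · have := (S_move h1 t).2 ht1
      have := dom_iff.1 hbm t
      omega
  exact hmne (dom_antisymm hm ha hma (dom_iff.2 key))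

/-! ### the template family -/

def T (v μ k l : ℕ) : ℕ → ℕ :=
  fun i => if i < μ then v else if i < μ + k then v - 1 else if i < μ + k + l then 1 else 0

section T
variable {v μ k l : ℕ}

lemma T_hi {i : ℕ} (h : i < μ) : T v μ k l i = v := by unfold T; rw [if_pos h]

lemma T_mid {i : ℕ} (h1 : μ ≤ i) (h2 : i < μ + k) : T v μ k l i = v - 1 := by
  unfold T; rw [if_neg (by omega), if_pos h2]

lemma T_one {i : ℕ} (h1 : μ + k ≤ i) (h2 : i < μ + k + l) : T v μ k l i = 1 := by
  unfold T; rw [if_neg (by omega), if_neg (by omega), if_pos h2]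

lemma T_zero {i : ℕ} (h1 : μ + k + l ≤ i) : T v μ k l i = 0 := by
  unfold T; rw [if_neg (by omega), if_neg (by omega), if_neg (by omega)]

lemma T_mono (hv : 2 ≤ v) : ∀ i j, i ≤ j → T v μ k l j ≤ T v μ k l i := by
  apply mono_of_step
  intro i
  by_cases c1 : i + 1 < μ
  · rw [T_hi c1, T_hi (by omega)]
  · by_cases c2 : i + 1 < μ + k
    · rw [T_mid (by omega) c2]
      by_cases c3 : i < μ
      · rw [T_hi c3]; omega
      · rw [T_mid (by omega) (by omega)]
    · by_cases c4 : i + 1 < μ + k + l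
      · rw [T_one (by omega) c4]
        by_cases c5 : i < μ
        · rw [T_hi c5]; omega
        · by_cases c6 : i < μ + k
          · rw [T_mid (by omega) c6]; omega
          · rw [T_one (by omega) (by omega)]
      · rw [T_zero (by omega)]; omega

lemma S_T_1 : ∀ d, d ≤ μ → S (T v μ k l) d = d * v := by
  intro d
  induction d with
  | zero => intro _; rw [S_zero, Nat.zero_mul]
  | succ m ih =>
    intro h
    rw [S_succ, ih (by omega), T_hi (by omega), Nat.succ_mul]

lemma S_T_2 : ∀ d, d ≤ k → S (T v μ k l) (μ + d) = μ * v + d * (v - 1) := by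
  intro d
  induction d with
  | zero => intro _; rw [Nat.add_zero, S_T_1 μ (le_refl μ), Nat.zero_mul, Nat.add_zero]
  | succ m ih =>
    intro h
    have : μ + (m + 1) = (μ + m) + 1 := by omega
    rw [this, S_succ, ih (by omega), T_mid (by omega) (by omega), Nat.succ_mul]
    omega

lemma S_T_3 : ∀ d, d ≤ l → S (T v μ k l) (μ + k + d) = μ * v + k * (v - 1) + d := by
  intro d
  induction d with
  | zero => intro _; rw [Nat.add_zero, S_T_2 k (le_refl k)]; omega
  | succ m ih =>
    intro h
    have : μ + k + (m + 1) = (μ + k + m) + 1 := by omega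
    rw [this, S_succ, ih (by omega), T_one (by omega) (by omega)]
    omega

lemma S_T_4 : ∀ t, μ + k + l ≤ t → S (T v μ k l) t = μ * v + k * (v - 1) + l := by
  intro t
  induction t with
  | zero =>
    intro h
    have h1 : μ = 0 ∧ k = 0 ∧ l = 0 := by omega
    rw [S_zero, h1.1, h1.2.1, h1.2.2]
    simp
  | succ m ih =>
    intro h
    rcases Nat.lt_or_ge m (μ + k + l) with h' | h'
    · have : m + 1 = μ + k + l := by omega
      rw [this, S_T_3 l (le_refl l)]
    · rw [S_succ, ih h', T_zero h']
      omega

lemma T_isPartition {n : ℕ} (hv : 2 ≤ v) (hn : μ * v + k * (v - 1) + l = n) :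
    IsPartition n (T v μ k l) := by
  have hle : μ + k + l ≤ n := by
    have h1 : μ ≤ μ * v := Nat.le_mul_of_pos_right μ (by omega)
    have h2 : k ≤ k * (v - 1) := Nat.le_mul_of_pos_right k (by omega)
    omega
  refine ⟨T_mono hv, ?_, ?_⟩
  · have := S_T_4 (v := v) (μ := μ) (k := k) (l := l) n hle
    rw [S_def] at this
    rw [this, hn]
  · intro i hi
    exact T_zero (by omega)

end T

/-- combine forcing on both sides of t0 -/
lemma force_eq {n : ℕ} {a x : ℕ → ℕ} (ha : IsPartition n a) (hx : IsPartition n x)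
    (hxa : Dom x a) (t0 s : ℕ) (ht0n : t0 ≤ n) (ht0 : S x t0 = S a t0)
    (hL : ∀ i, i < t0 → s ≤ a i ∧ a i ≤ s + 1)
    (hR : ∀ i, t0 ≤ i → i < n → a i ≤ 1) : x = a := by
  have hdom := dom_iff.1 hxa
  have left := forcing hx.1 0 t0 s (fun i _ hi => hL i hi) hdom (by rw [S_zero, S_zero]) ht0
  have right := forcing hx.1 t0 n 0
    (fun i hi1 hi2 => ⟨Nat.zero_le _, by simpa using hR i hi1 hi2⟩) hdom ht0
    (by rw [part_S_n hx, part_S_n ha])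
  apply part_eq_of_S_eq hx ha
  intro j
  rcases Nat.lt_or_ge j t0 with h | h
  · exact left j (Nat.zero_le _) (by omega)
  · rcases Nat.le_total j n with h' | h'
    · exact right j h h'
    · rw [part_S_ge hx h', part_S_ge ha h']

lemma hasMax_of_move {n : ℕ} {a : ℕ → ℕ} {i0 j0 : ℕ} (ha : IsPartition n a)
    (hmv : MoveOK n a i0 j0)
    (hforce : ∀ x, IsPartition n x → Dom x a →
      (∃ t0, i0 < t0 ∧ t0 ≤ j0 ∧ S x t0 = S a t0) → x = a) : HasMax n a := by
  refine ⟨moveF a i0 j0, move_isPartition ha hmv, move_dom hmv, move_ne hmv, ?_⟩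
  intro x hx hxa hxne
  refine dom_iff.2 fun t => ?_
  by_cases ht : i0 < t ∧ t ≤ j0
  · have hs := (S_move hmv t).1 ht
    by_contra hlt
    push_neg at hlt
    have heq : S x t = S a t := le_antisymm (dom_iff.1 hxa t) (by omega)
    exact hxne (hforce x hx hxa ⟨t, ht.1, ht.2, heq⟩)
  · have hs := (S_move hmv t).2 ht
    rw [hs]
    exact dom_iff.1 hxa t

/-- parameters of the irreducible families -/
def GoodP (n : ℕ) (p : ℕ × ℕ × ℕ × ℕ) : Prop :=
  2 ≤ p.1 ∧ 1 ≤ p.2.1 ∧ (1 ≤ p.2.2.1 → 3 ≤ p.1) ∧ (1 ≤ p.2.2.1 → 1 ≤ p.2.2.2 → 4 ≤ p.1) ∧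
    p.2.1 * p.1 + p.2.2.1 * (p.1 - 1) + p.2.2.2 = n

theorem goodP_hasMax {n : ℕ} {v μ k l : ℕ} (hp : GoodP n (v, μ, k, l)) :
    HasMax n (T v μ k l) := by
  obtain ⟨hv, hμ, hk3, hk4, hn⟩ := hp
  simp only at hv hμ hk3 hk4 hn
  have ha : IsPartition n (T v μ k l) := T_isPartition hv hn
  have h2μ : 2 * μ ≤ μ * v := by
    calc 2 * μ = μ * 2 := by ring
    _ ≤ μ * v := Nat.mul_le_mul_left μ hv
  have hkv : k ≤ k * (v - 1) := by
    rcases Nat.eq_zero_or_pos k with h | h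
    · omega
    · exact Nat.le_mul_of_pos_right k (by omega)
  rcases Nat.eq_zero_or_pos k with hk0 | hkpos
  · subst hk0
    rcases Nat.lt_or_ge v 3 with hv2 | hv3
    · -- v = 2
      obtain rfl : v = 2 := by omega
      rcases Nat.eq_zero_or_pos l with hl0 | hlpos
      · -- v = 2, l = 0 : pure rectangle of 2s, move (μ-1, μ)
        subst hl0
        have e1 : T 2 μ 0 0 (μ - 1) = 2 := T_hi (by omega)
        have e2 : T 2 μ 0 0 μ = 0 := T_zero (by omega)
        refine hasMax_of_move ha (i0 := μ - 1) (j0 := μ)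
          ⟨by omega, by omega, by omega, by omega⟩ ?_
        intro x hx hxa ⟨t0, h1, h2, h3⟩
        rw [show t0 = μ from by omega] at h3
        refine force_eq ha hx hxa μ 1 (by omega) h3 ?_ ?_
        · intro i hi; rw [T_hi hi]; omega
        · intro i hi1 hi2; rw [T_zero (by omega)]; omega
      · -- v = 2, l ≥ 1 : slide (μ-1, μ+l)
        have e1 : T 2 μ 0 l (μ - 1) = 2 := T_hi (by omega)
        have e2 : T 2 μ 0 l (μ + l) = 0 := T_zero (by omega)
        have e3 : T 2 μ 0 l μ = 1 := T_one (by omega) (by omega)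
        have e4 : T 2 μ 0 l (μ + l - 1) = 1 := T_one (by omega) (by omega)
        refine hasMax_of_move ha (i0 := μ - 1) (j0 := μ + l)
          ⟨by omega, by omega, by omega, fun h => ⟨by
              rw [show μ - 1 + 1 = μ from by omega]; omega,
            by omega⟩⟩ ?_
        intro x hx hxa ⟨t0, h1, h2, h3⟩
        refine force_eq ha hx hxa t0 1 (by omega) h3 ?_ ?_
        · intro i hi
          rcases Nat.lt_or_ge i μ with h | h
          · rw [T_hi h]; omega
          · rw [T_one (by omega) (by omega)]; omega
        · intro i hi1 hi2
          rcases Nat.lt_or_ge i (μ + l) with h | h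
          · rw [T_one (by omega) (by omega)]
          · rw [T_zero (by omega)]; omega
    · -- k = 0, v ≥ 3 : move (μ-1, μ)
      have e1 : T v μ 0 l (μ - 1) = v := T_hi (by omega)
      have e2 : T v μ 0 l μ ≤ 1 := by
        rcases Nat.eq_zero_or_pos l with hl0 | hlpos
        · rw [T_zero (by omega)]; omega
        · rw [T_one (by omega) (by omega)]
      refine hasMax_of_move ha (i0 := μ - 1) (j0 := μ)
        ⟨by omega, by omega, by omega, by omega⟩ ?_
      intro x hx hxa ⟨t0, h1, h2, h3⟩
      rw [show t0 = μ from by omega] at h3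
      refine force_eq ha hx hxa μ (v - 1) (by omega) h3 ?_ ?_
      · intro i hi; rw [T_hi hi]; omega
      · intro i hi1 hi2
        rcases Nat.lt_or_ge i (μ + 0 + l) with h | h
        · rw [T_one (by omega) (by omega)]
        · rw [T_zero (by omega)]; omega
  · -- k ≥ 1, v ≥ 3 : move (μ+k-1, μ+k)
    have hv3 := hk3 hkpos
    have e1 : T v μ k l (μ + k - 1) = v - 1 := T_mid (by omega) (by omega)
    have e2 : T v μ k l (μ + k) ≤ 1 := by
      rcases Nat.eq_zero_or_pos l with hl0 | hlpos
      · rw [T_zero (by omega)]; omega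
      · rw [T_one (by omega) (by omega)]
    have e3 : 3 ≤ T v μ k l (μ + k - 1) → True := fun _ => trivial
    have hval : T v μ k l (μ + k) + 2 ≤ T v μ k l (μ + k - 1) := by
      rcases Nat.eq_zero_or_pos l with hl0 | hlpos
      · have : T v μ k l (μ + k) = 0 := T_zero (by omega)
        omega
      · have : T v μ k l (μ + k) = 1 := T_one (by omega) (by omega)
        have := hk4 hkpos hlpos
        omega
    refine hasMax_of_move ha (i0 := μ + k - 1) (j0 := μ + k)
      ⟨by omega, by omega, hval, by omega⟩ ?_
    intro x hx hxa ⟨t0, h1, h2, h3⟩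
    rw [show t0 = μ + k from by omega] at h3
    refine force_eq ha hx hxa (μ + k) (v - 1) (by omega) h3 ?_ ?_
    · intro i hi
      rcases Nat.lt_or_ge i μ with h | h
      · rw [T_hi h]; omega
      · rw [T_mid (by omega) (by omega)]; omega
    · intro i hi1 hi2
      rcases Nat.lt_or_ge i (μ + k + l) with h | h
      · rw [T_one (by omega) (by omega)]
      · rw [T_zero (by omega)]; omega

lemma goodP_mk {n v μ k l : ℕ} (h1 : 2 ≤ v) (h2 : 1 ≤ μ) (h3 : 1 ≤ k → 3 ≤ v)
    (h4 : 1 ≤ k → 1 ≤ l → 4 ≤ v) (h5 : μ * v + k * (v - 1) + l = n) :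
    GoodP n (v, μ, k, l) := ⟨h1, h2, h3, h4, h5⟩

/-- recover the defining equation from the partition property -/
lemma T_sum_eq {n v μ k l : ℕ} (ha : IsPartition n (T v μ k l)) :
    μ * v + k * (v - 1) + l = n := by
  rcases Nat.le_total (μ + k + l) n with h | h
  · have h1 := part_S_n ha
    rw [S_T_4 n h] at h1
    exact h1
  · have h1 := part_S_ge ha h
    rw [S_T_3 l (le_refl l)] at h1
    exact h1

lemma eq_T' {a : ℕ → ℕ} {v μ k l : ℕ}
    (h1 : ∀ i, i < μ → a i = v)
    (h2 : ∀ i, μ ≤ i → i < μ + k → a i = v - 1)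
    (h3 : ∀ i, μ + k ≤ i → i < μ + k + l → a i = 1)
    (h4 : ∀ i, μ + k + l ≤ i → a i = 0) : a = T v μ k l := by
  funext i
  rcases Nat.lt_or_ge i μ with c | c
  · rw [h1 i c, T_hi c]
  · rcases Nat.lt_or_ge i (μ + k) with c2 | c2
    · rw [h2 i c c2, T_mid c c2]
    · rcases Nat.lt_or_ge i (μ + k + l) with c3 | c3
      · rw [h3 i c2 c3, T_one c2 c3]
      · rw [h4 i c3, T_zero c3]

/-- the next strict drop of the part sizes -/
lemma next_run {n : ℕ} {a : ℕ → ℕ} (ha : IsPartition n a) {r e : ℕ}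
    (hr : a r = 0) (hpos : 1 ≤ a e) :
    ∃ f, e < f ∧ f ≤ r ∧ a f < a e ∧ a (f-1) = a e ∧ ∀ i, i < f → a e ≤ a i := by
  classical
  have hex : ∃ i, a i < a e := ⟨r, by omega⟩
  set f := Nat.find hex with hf
  have hflt : a f < a e := Nat.find_spec hex
  have hfmin : ∀ i, i < f → a e ≤ a i := by
    intro i hi
    have := Nat.find_min hex hi
    omega
  have hef : e < f := by
    rcases Nat.lt_or_ge e f with h | h
    · exact h
    · exact absurd (ha.1 f e h) (by omega)
  have hfr : f ≤ r := by
    rcases Nat.lt_or_ge r f with h | h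
    · have := hfmin r h; omega
    · exact h
  have hfm : a (f-1) = a e := by
    have h1 := hfmin (f-1) (by omega)
    have h2 := ha.1 e (f-1) (by omega)
    omega
  exact ⟨f, hef, hfr, hflt, hfm, hfmin⟩

theorem classify {n : ℕ} {a : ℕ → ℕ} (ha : IsPartition n a) (hne : a ≠ ones n)
    (hnm : ∀ i j i' j', MoveOK n a i j → MoveOK n a i' j' →
      ¬(j ≤ i' ∨ (j = i' + 1 ∧ a i' = a j + 1))) :
    ∃ v μ k l, GoodP n (v, μ, k, l) ∧ a = T v μ k l := by
  classical
  -- basic facts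
  have hv : 2 ≤ a 0 := by
    by_contra h
    exact hne (eq_ones_of_le_one ha (by omega))
  set v := a 0 with hvdef
  -- n ≥ 1
  have hn1 : 1 ≤ n := by
    by_contra h
    have h0 : n = 0 := by omega
    have := ha.2.2 0 (by omega)
    omega
  -- first zero r
  have hexr : ∃ i, a i = 0 := ⟨n, ha.2.2 n (le_refl n)⟩
  set r := Nat.find hexr with hrdef
  have hr0 : a r = 0 := Nat.find_spec hexr
  have hrmin : ∀ i, i < r → 1 ≤ a i := by
    intro i hi
    have := Nat.find_min hexr hi
    omega
  have hr1 : 1 ≤ r := by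
    rcases Nat.eq_zero_or_pos r with h | h
    · rw [h] at hr0; omega
    · exact h
  have hrn : r ≤ n := by
    rcases Nat.lt_or_ge n r with h | h
    · have := hrmin n h
      have := ha.2.2 n (le_refl n)
      omega
    · exact h
  -- r < n : otherwise a = ones
  have hrltn : r < n := by
    rcases Nat.eq_or_lt_of_le hrn with he | h
    · exfalso
      -- sum ≥ n+1
      have hlt : ∑ i ∈ Finset.range n, ones n i < ∑ i ∈ Finset.range n, a i := by
        apply Finset.sum_lt_sum
        · intro i hi
          simp only [Finset.mem_range] at hi
          have := hrmin i (by omega)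
          unfold ones
          rw [if_pos hi]
          omega
        · refine ⟨0, Finset.mem_range.2 (by omega), ?_⟩
          unfold ones
          rw [if_pos (by omega)]
          omega
      have h1 : ∑ i ∈ Finset.range n, ones n i = n := (ones_isPartition n).2.1
      have h2 : ∑ i ∈ Finset.range n, a i = n := ha.2.1
      omega
    · exact h
  -- first drop μ
  obtain ⟨μ, hμpos, hμr, hμlt, hμm, hμmin⟩ := next_run ha (e := 0) hr0 (by omega)
  have hμconst : ∀ i, i < μ → a i = v := by
    intro i hi
    have h1 := hμmin i hi
    have h2 := ha.1 0 i (Nat.zero_le i)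
    omega
  rcases Nat.eq_zero_or_pos (a μ) with hμ0 | hμpos2
  · -- family A : a = T v μ 0 0
    refine ⟨v, μ, 0, 0, ?_, ?_⟩
    case _ =>
      have haT : a = T v μ 0 0 := by
        apply eq_T'
        · exact hμconst
        · intro i h1 h2; omega
        · intro i h1 h2; omega
        · intro i hi
          have := ha.1 μ i (by omega)
          omega
      exact goodP_mk hv (by omega) (fun h => by omega) (fun h h' => by omega) (T_sum_eq (haT ▸ ha))
    case _ =>
      apply eq_T'
      · exact hμconst
      · intro i h1 h2; omega
      · intro i h1 h2; omega
      · intro i hi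
        have := ha.1 μ i (by omega)
        omega
  · -- a μ ≥ 1
    obtain ⟨μ₂, hμ₂gt, hμ₂r, hμ₂lt, hμ₂m, hμ₂min⟩ := next_run ha (e := μ) hr0 hμpos2
    have hrun2 : ∀ i, μ ≤ i → i < μ₂ → a i = a μ := by
      intro i h1 h2
      have := hμ₂min i h2
      have := ha.1 μ i h1
      omega
    rcases Nat.lt_or_ge (a μ + 1) v with hg2 | hg1
    · -- gap ≥ 2 : notch move (μ-1, μ)
      have mv1 : MoveOK n a (μ - 1) μ :=
        ⟨by omega, by omega, by rw [hμconst (μ-1) (by omega)]; omega, by omega⟩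
      rcases Nat.eq_or_lt_of_le hμpos2 with h1 | h2
      · -- a μ = 1 : family B
        refine ⟨v, μ, 0, r - μ, ?_, ?_⟩
        case _ =>
          have haT : a = T v μ 0 (r - μ) := by
            apply eq_T'
            · exact hμconst
            · intro i hh1 hh2; omega
            · intro i hh1 hh2
              have hh3 := ha.1 μ i (by omega)
              have hh4 := hrmin i (by omega)
              omega
            · intro i hi
              have := ha.1 r i (by omega)
              omega
          exact goodP_mk hv (by omega) (fun h => by omega) (fun h h' => by omega) (T_sum_eq (haT ▸ ha))
        case _ =>
          apply eq_T'
          · exact hμconst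
          · intro i hh1 hh2; omega
          · intro i hh1 hh2
            have hh3 := ha.1 μ i (by omega)
            have hh4 := hrmin i (by omega)
            omega
          · intro i hi
            have := ha.1 r i (by omega)
            omega
      · -- a μ ≥ 2 : second movable below, contradiction
        exfalso
        rcases Nat.lt_or_ge (a μ₂ + 1) (a μ) with hg2' | hg1'
        · -- notch at (μ₂-1, μ₂)
          have mv2 : MoveOK n a (μ₂ - 1) μ₂ :=
            ⟨by omega, by omega, by rw [hrun2 (μ₂-1) (by omega) (by omega)]; omega, by omega⟩
          exact hnm _ _ _ _ mv1 mv2 (Or.inl (by omega))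
        · -- a μ₂ = a μ - 1
          have hw2 : a μ₂ + 1 = a μ := by omega
          have hw2pos : 1 ≤ a μ₂ := by omega
          obtain ⟨μ₃, hμ₃gt, hμ₃r, hμ₃lt, hμ₃m, hμ₃min⟩ := next_run ha (e := μ₂) hr0 hw2pos
          rcases Nat.eq_or_lt_of_le (Nat.succ_le_of_lt hμ₃lt) with h3 | h3
          · -- a μ₃ = a μ₂ - 1 = a μ - 2 : slide (μ₂-1, μ₃)
            have mv2 : MoveOK n a (μ₂ - 1) μ₃ := by
              refine ⟨by omega, by omega, ?_, ?_⟩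
              · rw [hrun2 (μ₂-1) (by omega) (by omega)]; omega
              · intro h
                rw [hrun2 (μ₂-1) (by omega) (by omega),
                    show μ₂ - 1 + 1 = μ₂ from by omega]
                constructor
                · omega
                · rw [hμ₃m]; omega
            exact hnm _ _ _ _ mv1 mv2 (Or.inl (by omega))
          · -- a μ₃ ≤ a μ₂ - 2 : notch (μ₃-1, μ₃)
            have mv2 : MoveOK n a (μ₃ - 1) μ₃ :=
              ⟨by omega, by omega, by rw [hμ₃m]; omega, by omega⟩
            exact hnm _ _ _ _ mv1 mv2 (Or.inl (by omega))
    · -- gap = 1 : a μ = v - 1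
      have hμval : a μ + 1 = v := by omega
      rcases Nat.eq_or_lt_of_le (Nat.succ_le_of_lt hμ₂lt) with hs | hns
      · -- a μ₂ = a μ - 1 = v - 2 : slide at top, move1 = (μ-1, μ₂)
        have mv1 : MoveOK n a (μ - 1) μ₂ := by
          refine ⟨by omega, by omega, ?_, ?_⟩
          · rw [hμconst (μ-1) (by omega)]; omega
          · intro h
            rw [hμconst (μ-1) (by omega), show μ - 1 + 1 = μ from by omega]
            constructor
            · omega
            · rw [hμ₂m]; omega
        rcases Nat.lt_or_ge v 3 with hv2 | hv3
        · -- v = 2 : family B with v = 2 (tail of ones), a μ₂ = 0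
          refine ⟨v, μ, 0, μ₂ - μ, ?_, ?_⟩
          case _ =>
            have haT : a = T v μ 0 (μ₂ - μ) := by
              apply eq_T'
              · exact hμconst
              · intro i hh1 hh2; omega
              · intro i hh1 hh2
                have := hrun2 i (by omega) (by omega)
                omega
              · intro i hi
                have := ha.1 μ₂ i (by omega)
                omega
            exact goodP_mk hv (by omega) (fun h => by omega) (fun h h' => by omega) (T_sum_eq (haT ▸ ha))
          case _ =>
            apply eq_T'
            · exact hμconst
            · intro i hh1 hh2; omega
            · intro i hh1 hh2
              have := hrun2 i (by omega) (by omega)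
              omega
            · intro i hi
              have := ha.1 μ₂ i (by omega)
              omega
        · -- v ≥ 3 : contradiction, second movable at end of (v-1)-run
          exfalso
          have hw2pos : 1 ≤ a μ₂ := by omega
          obtain ⟨μ₃, hμ₃gt, hμ₃r, hμ₃lt, hμ₃m, hμ₃min⟩ := next_run ha (e := μ₂) hr0 hw2pos
          have hrun3 : ∀ i, μ₂ ≤ i → i < μ₃ → a i = a μ₂ := by
            intro i h1 h2
            have := hμ₃min i h2
            have := ha.1 μ₂ i h1
            omega
          rcases Nat.eq_or_lt_of_le (Nat.succ_le_of_lt hμ₃lt) with h3 | h3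
          · -- slide (μ₂-1, μ₃), overlap pair
            have mv2 : MoveOK n a (μ₂ - 1) μ₃ := by
              refine ⟨by omega, by omega, ?_, ?_⟩
              · rw [hrun2 (μ₂-1) (by omega) (by omega)]; omega
              · intro h
                rw [hrun2 (μ₂-1) (by omega) (by omega),
                    show μ₂ - 1 + 1 = μ₂ from by omega]
                constructor
                · omega
                · rw [hμ₃m]; omega
            refine hnm _ _ _ _ mv1 mv2 (Or.inr ⟨by omega, ?_⟩)
            rw [hrun2 (μ₂-1) (by omega) (by omega)]
            omega
          · -- notch (μ₃-1, μ₃)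
            have mv2 : MoveOK n a (μ₃ - 1) μ₃ :=
              ⟨by omega, by omega, by rw [hμ₃m]; omega, by omega⟩
            exact hnm _ _ _ _ mv1 mv2 (Or.inl (by omega))
      · -- a μ₂ ≤ v - 3 (second gap ≥ 2) : main move at (μ₂-1, μ₂)
        have hv3 : 3 ≤ v := by omega
        have mv1 : MoveOK n a (μ₂ - 1) μ₂ :=
          ⟨by omega, by omega, by rw [hrun2 (μ₂-1) (by omega) (by omega)]; omega, by omega⟩
        rcases Nat.eq_zero_or_pos (a μ₂) with hu0 | hupos
        · -- family C : a = T v μ (μ₂-μ) 0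
          refine ⟨v, μ, μ₂ - μ, 0, ?_, ?_⟩
          case _ =>
            have haT : a = T v μ (μ₂ - μ) 0 := by
              apply eq_T'
              · exact hμconst
              · intro i hh1 hh2
                have := hrun2 i hh1 (by omega)
                omega
              · intro i hh1 hh2; omega
              · intro i hi
                have := ha.1 μ₂ i (by omega)
                omega
            exact goodP_mk hv (by omega) (fun h => by omega) (fun h h' => by omega) (T_sum_eq (haT ▸ ha))
          case _ =>
            apply eq_T'
            · exact hμconst
            · intro i hh1 hh2
              have := hrun2 i hh1 (by omega)
              omega
            · intro i hh1 hh2; omega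
            · intro i hi
              have := ha.1 μ₂ i (by omega)
              omega
        · rcases Nat.eq_or_lt_of_le hupos with hu1 | hu2
          · -- a μ₂ = 1 : family D, v ≥ 4
            have hμ₂ltr : μ₂ < r := by
              rcases Nat.eq_or_lt_of_le hμ₂r with he | h
              · rw [he] at hu1; omega
              · exact h
            refine ⟨v, μ, μ₂ - μ, r - μ₂, ?_, ?_⟩
            case _ =>
              have haT : a = T v μ (μ₂ - μ) (r - μ₂) := by
                apply eq_T'
                · exact hμconst
                · intro i hh1 hh2
                  have := hrun2 i hh1 (by omega)
                  omega
                · intro i hh1 hh2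
                  have hh3 := ha.1 μ₂ i (by omega)
                  have hh4 := hrmin i (by omega)
                  omega
                · intro i hi
                  have := ha.1 r i (by omega)
                  omega
              exact goodP_mk hv (by omega) (fun h => by omega) (fun h h' => by omega) (T_sum_eq (haT ▸ ha))
            case _ =>
              apply eq_T'
              · exact hμconst
              · intro i hh1 hh2
                have := hrun2 i hh1 (by omega)
                omega
              · intro i hh1 hh2
                have hh3 := ha.1 μ₂ i (by omega)
                have hh4 := hrmin i (by omega)
                omega
              · intro i hi
                have := ha.1 r i (by omega)
                omega
          · -- a μ₂ ≥ 2 : contradiction below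
            exfalso
            obtain ⟨μ₃, hμ₃gt, hμ₃r, hμ₃lt, hμ₃m, hμ₃min⟩ :=
              next_run ha (e := μ₂) hr0 (by omega)
            have hrun3 : ∀ i, μ₂ ≤ i → i < μ₃ → a i = a μ₂ := by
              intro i h1 h2
              have := hμ₃min i h2
              have := ha.1 μ₂ i h1
              omega
            rcases Nat.lt_or_ge (a μ₃ + 1) (a μ₂) with hg2' | hg1'
            · -- notch (μ₃-1, μ₃)
              have mv2 : MoveOK n a (μ₃ - 1) μ₃ :=
                ⟨by omega, by omega, by rw [hμ₃m]; omega, by omega⟩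
              exact hnm _ _ _ _ mv1 mv2 (Or.inl (by omega))
            · -- a μ₃ = a μ₂ - 1 ≥ 1
              obtain ⟨μ₄, hμ₄gt, hμ₄r, hμ₄lt, hμ₄m, hμ₄min⟩ :=
                next_run ha (e := μ₃) hr0 (by omega)
              rcases Nat.eq_or_lt_of_le (Nat.succ_le_of_lt hμ₄lt) with h4 | h4
              · -- slide (μ₃-1, μ₄)
                have mv2 : MoveOK n a (μ₃ - 1) μ₄ := by
                  refine ⟨by omega, by omega, ?_, ?_⟩
                  · rw [hrun3 (μ₃-1) (by omega) (by omega)]; omega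
                  · intro h
                    rw [hrun3 (μ₃-1) (by omega) (by omega),
                        show μ₃ - 1 + 1 = μ₃ from by omega]
                    constructor
                    · omega
                    · rw [hμ₄m]; omega
                exact hnm _ _ _ _ mv1 mv2 (Or.inl (by omega))
              · -- notch (μ₄-1, μ₄)
                have mv2 : MoveOK n a (μ₄ - 1) μ₄ :=
                  ⟨by omega, by omega, by rw [hμ₄m]; omega, by omega⟩
                exact hnm _ _ _ _ mv1 mv2 (Or.inl (by omega))


/-! ### injectivity of the parametrization -/

lemma T_top_lt {v μ k l : ℕ} (hv : 2 ≤ v) : T v μ k l μ ≤ v - 1 := by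
  rcases Nat.lt_or_ge μ (μ + k) with c | c
  · rw [T_mid (le_refl μ) c]
  · rcases Nat.lt_or_ge μ (μ + k + l) with c2 | c2
    · rw [T_one (by omega) c2]; omega
    · rw [T_zero (by omega)]; omega

lemma T_after_k {v μ k l : ℕ} : T v μ k l (μ + k) ≤ 1 := by
  rcases Nat.lt_or_ge (μ + k) (μ + k + l) with c | c
  · rw [T_one (le_refl _) c]
  · rw [T_zero (by omega)]
    omega

theorem T_inj {n : ℕ} {p q : ℕ × ℕ × ℕ × ℕ} (hp : GoodP n p) (hq : GoodP n q)
    (h : T p.1 p.2.1 p.2.2.1 p.2.2.2 = T q.1 q.2.1 q.2.2.1 q.2.2.2) : p = q := by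
  obtain ⟨v, μ, k, l⟩ := p
  obtain ⟨v', μ', k', l'⟩ := q
  obtain ⟨hv, hμ, hk3, hk4, heq⟩ := hp
  obtain ⟨hv', hμ', hk3', hk4', heq'⟩ := hq
  simp only at hv hμ hk3 hk4 heq hv' hμ' hk3' hk4' heq' h
  have h0 : ∀ i, T v μ k l i = T v' μ' k' l' i := fun i => congrFun h i
  have hvv : v = v' := by
    have := h0 0
    rw [T_hi (by omega), T_hi (by omega)] at this
    exact this
  subst hvv
  have hμμ : μ = μ' := by
    rcases lt_trichotomy μ μ' with hlt | he | hgt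
    · have := h0 μ
      rw [T_hi hlt] at this
      have h2 := T_top_lt (μ := μ) (k := k) (l := l) hv
      omega
    · exact he
    · have := h0 μ'
      rw [T_hi hgt] at this
      have h2 := T_top_lt (μ := μ') (k := k') (l := l') hv
      omega
  subst hμμ
  have hkk : k = k' := by
    rcases lt_trichotomy k k' with hlt | he | hgt
    · have h1 : T v μ k l (μ + k) = v - 1 := by
        rw [h0 (μ + k)]; exact T_mid (by omega) (by omega)
      have h2 := T_after_k (v := v) (μ := μ) (k := k) (l := l)
      have h3 := hk3' (by omega)
      omega
    · exact he
    · have h1 : T v μ k' l' (μ + k') = v - 1 := by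
        rw [← h0 (μ + k')]; exact T_mid (by omega) (by omega)
      have h2 := T_after_k (v := v) (μ := μ) (k := k') (l := l')
      have h3 := hk3 (by omega)
      omega
  subst hkk
  have hll : l = l' := by
    rcases lt_trichotomy l l' with hlt | he | hgt
    · have h1 : T v μ k l' (μ + k + l) = 0 := by
        rw [← h0 (μ + k + l)]; exact T_zero (le_refl _)
      have h2 : T v μ k l' (μ + k + l) = 1 := T_one (by omega) (by omega)
      omega
    · exact he
    · have h1 : T v μ k l (μ + k + l') = 0 := by
        rw [h0 (μ + k + l')]; exact T_zero (le_refl _)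
      have h2 : T v μ k l (μ + k + l') = 1 := T_one (by omega) (by omega)
      omega
  subst hll
  rfl

/-! ### the parameter finset -/

open Classical in
noncomputable def Params (n : ℕ) : Finset (ℕ × ℕ × ℕ × ℕ) :=
  (Finset.range (n+1) ×ˢ Finset.range (n+1) ×ˢ Finset.range (n+1) ×ˢ
    Finset.range (n+1)).filter (fun p => GoodP n p)

lemma mem_Params {n : ℕ} {p : ℕ × ℕ × ℕ × ℕ} : p ∈ Params n ↔ GoodP n p := by
  classical
  unfold Params
  rw [Finset.mem_filter]
  constructor
  · exact fun h => h.2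
  · intro hg
    refine ⟨?_, hg⟩
    obtain ⟨v, μ, k, l⟩ := p
    obtain ⟨hv, hμ, hk3, hk4, heq⟩ := hg
    simp only at hv hμ hk3 hk4 heq
    simp only [Finset.mem_product, Finset.mem_range]
    have h1 : v ≤ μ * v := Nat.le_mul_of_pos_left v (by omega)
    have h2 : μ ≤ μ * v := Nat.le_mul_of_pos_right μ (by omega)
    have h3 : k ≤ k * (v - 1) := Nat.le_mul_of_pos_right k (by omega)
    refine ⟨by omega, by omega, by omega, by omega⟩

open Classical in
noncomputable def JIset (n : ℕ) : Finset (ℕ → ℕ) :=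
  (Params n).image (fun p : ℕ × ℕ × ℕ × ℕ => T p.1 p.2.1 p.2.2.1 p.2.2.2)

open Classical in
lemma joinIrr_eq_image (n : ℕ) :
    {a : ℕ → ℕ | JoinIrr n a} = ↑(JIset n) := by
  unfold JIset
  ext a
  simp only [Set.mem_setOf_eq, Finset.coe_image, Set.mem_image, Finset.mem_coe]
  constructor
  · intro hJ
    obtain ⟨ha, hne, hmax⟩ := joinIrr_iff.1 hJ
    have hnm : ∀ i j i' j', MoveOK n a i j → MoveOK n a i' j' →
        ¬(j ≤ i' ∨ (j = i' + 1 ∧ a i' = a j + 1)) :=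
      fun i j i' j' m1 m2 hsep => no_hasMax ha m1 m2 hsep hmax
    obtain ⟨v, μ, k, l, hgood, hT⟩ := classify ha hne hnm
    exact ⟨(v, μ, k, l), mem_Params.2 hgood, hT.symm⟩
  · rintro ⟨⟨v, μ, k, l⟩, hp, rfl⟩
    have hgood := mem_Params.1 hp
    obtain ⟨hv, hμ, hk3, hk4, heq⟩ := hgood
    simp only at hv hμ hk3 hk4 heq
    refine joinIrr_iff.2 ⟨T_isPartition hv heq, ?_, goodP_hasMax ⟨hv, hμ, hk3, hk4, heq⟩⟩
    intro hcon
    have h2 : μ ≤ μ * v := Nat.le_mul_of_pos_right μ (by omega)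
    have hn2 : 2 ≤ n := by
      have h1 : 2 * μ ≤ μ * v := by
        calc 2 * μ = μ * 2 := by ring
        _ ≤ μ * v := Nat.mul_le_mul_left μ hv
      omega
    have h0 := congrFun hcon 0
    rw [T_hi (show (0:ℕ) < μ by omega)] at h0
    have h1 : ones n 0 = 1 := by
      simp only [ones]
      rw [if_pos (by omega : (0:ℕ) < n)]
    omega

open Classical in
lemma ncard_joinIrr (n : ℕ) :
    Set.ncard {a : ℕ → ℕ | JoinIrr n a} = (Params n).card := by
  rw [joinIrr_eq_image, Set.ncard_coe_finset]
  unfold JIset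
  apply Finset.card_image_of_injOn
  intro p hp q hq h
  exact T_inj (mem_Params.1 (by simpa using hp)) (mem_Params.1 (by simpa using hq)) h

open Finset

/-- μv + k(v-1) = (μ+k)(v-1) + μ -/
lemma m_rep {v μ k : ℕ} (hv : 1 ≤ v) :
    μ * v + k * (v - 1) = (μ + k) * (v - 1) + μ := by
  have e1 : μ * v = μ * (v - 1) + μ := by
    calc μ * v = μ * (v - 1 + 1) := by rw [Nat.sub_add_cancel hv]
    _ = μ * (v - 1) + μ := by ring
  have e2 : (μ + k) * (v - 1) = μ * (v - 1) + k * (v - 1) := by ring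
  omega

lemma rep_div {s q r : ℕ} (hs : 0 < s) (hr : r < s) :
    (s * q + r) / s = q ∧ (s * q + r) % s = r := by
  constructor
  · rw [Nat.mul_add_div hs, Nat.div_eq_of_lt hr, Nat.add_zero]
  · rw [Nat.mul_add_mod, Nat.mod_eq_of_lt hr]

section counting
variable (n : ℕ)

open Classical in
noncomputable def PBD' : Finset (ℕ × ℕ) :=
  ((range n) ×ˢ (range n)).filter
    (fun q => 1 ≤ q.1 ∧ (3 * q.1 + 1 ≤ q.2 ∨ q.2 = 2 * q.1 ∨ q.2 = 3 * q.1))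

open Classical in
noncomputable def SL : Finset (ℕ × ℕ) :=
  ((range n) ×ˢ (range n)).filter (fun q => 1 ≤ q.1 ∧ 3 * q.1 + 1 ≤ q.2)

open Classical in
noncomputable def S2 : Finset (ℕ × ℕ) :=
  ((range n) ×ˢ (range n)).filter (fun q => q.2 = 2 * q.1)

open Classical in
noncomputable def S3 : Finset (ℕ × ℕ) :=
  ((range n) ×ˢ (range n)).filter (fun q => q.2 = 3 * q.1)

end counting

open Classical

lemma goodP_elim {n v μ k l : ℕ} (h : GoodP n (v, μ, k, l)) :
    2 ≤ v ∧ 1 ≤ μ ∧ (1 ≤ k → 3 ≤ v) ∧ (1 ≤ k → 1 ≤ l → 4 ≤ v) ∧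
      μ * v + k * (v - 1) + l = n := h

/-- the l ≥ 1 part of Params is in bijection with PBD' -/
lemma card_PBD (n : ℕ) :
    ((Params n).filter (fun p => 1 ≤ p.2.2.2)).card = (PBD' n).card := by
  apply Finset.card_bij
    (i := fun p _ => (p.2.1 + p.2.2.1, p.2.1 * p.1 + p.2.2.1 * (p.1 - 1)))
  · -- maps into PBD'
    rintro ⟨v, μ, k, l⟩ hp
    rw [Finset.mem_filter] at hp
    obtain ⟨hv, hμ, hk3, hk4, heq⟩ := goodP_elim (mem_Params.1 hp.1)
    have hl : 1 ≤ l := hp.2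
    show (μ + k, μ * v + k * (v - 1)) ∈ PBD' n
    set s := μ + k with hs
    set m := μ * v + k * (v - 1) with hm
    have hrep : m = s * (v - 1) + μ := m_rep (by omega)
    have hsv : s ≤ s * (v - 1) := Nat.le_mul_of_pos_right s (by omega)
    have hsm : s < m := by omega
    have hmn : m < n := by omega
    rw [PBD', Finset.mem_filter, Finset.mem_product, Finset.mem_range, Finset.mem_range]
    refine ⟨⟨by omega, by omega⟩, by omega, ?_⟩
    show 3 * s + 1 ≤ m ∨ m = 2 * s ∨ m = 3 * s
    rcases Nat.lt_or_ge v 4 with hv4 | hv4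
    · rcases Nat.lt_or_ge v 3 with hv3 | hv3
      · -- v = 2, k = 0
        have hk0 : k = 0 := by
          by_contra h
          have := hk3 (by omega)
          omega
        have : s * (v - 1) = s := by
          rw [show v - 1 = 1 by omega]
          ring
        omega
      · -- v = 3, k = 0 (since l ≥ 1)
        have hk0 : k = 0 := by
          by_contra h
          have := hk4 (by omega) (by omega)
          omega
        have : s * (v - 1) = 2 * s := by
          rw [show v - 1 = 2 by omega]
          ring
        omega
    · -- v ≥ 4
      have : 3 * s ≤ s * (v - 1) := by
        calc 3 * s = s * 3 := by ring
        _ ≤ s * (v - 1) := Nat.mul_le_mul_left s (by omega)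
      omega
  · -- injective
    rintro ⟨v, μ, k, l⟩ hp ⟨v', μ', k', l'⟩ hp' hpq
    rw [Finset.mem_filter] at hp hp'
    obtain ⟨hv, hμ, hk3, hk4, heq⟩ := goodP_elim (mem_Params.1 hp.1)
    obtain ⟨hv', hμ', hk3', hk4', heq'⟩ := goodP_elim (mem_Params.1 hp'.1)
    have hl : 1 ≤ l := hp.2
    have hl' : 1 ≤ l' := hp'.2
    have hpq' : (μ + k, μ * v + k * (v - 1)) = (μ' + k', μ' * v' + k' * (v' - 1)) := hpq
    rw [Prod.mk.injEq] at hpq'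
    obtain ⟨hseq, hmeq⟩ := hpq'
    have hrep : μ * v + k * (v - 1) = (μ + k) * (v - 1) + μ := m_rep (by omega)
    have hrep' : μ' * v' + k' * (v' - 1) = (μ' + k') * (v' - 1) + μ' := m_rep (by omega)
    set s := μ + k with hs
    have hd1 : ((μ * v + k * (v-1)) - 1) / s = v - 1 ∧ ((μ * v + k * (v-1)) - 1) % s = μ - 1 := by
      have h1 : (μ * v + k * (v-1)) - 1 = s * (v - 1) + (μ - 1) := by omega
      rw [h1]
      exact rep_div (by omega) (by omega)
    have hd2 : ((μ' * v' + k' * (v'-1)) - 1) / s = v' - 1 ∧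
        ((μ' * v' + k' * (v'-1)) - 1) % s = μ' - 1 := by
      have h1 : (μ' * v' + k' * (v'-1)) - 1 = s * (v' - 1) + (μ' - 1) := by
        rw [← hseq] at hrep'
        omega
      rw [h1]
      exact rep_div (by omega) (by omega)
    rw [← hmeq] at hd2
    have hvv : v = v' := by
      have h1 := hd1.1
      have h2 := hd2.1
      omega
    have hμμ : μ = μ' := by
      have h1 := hd1.2
      have h2 := hd2.2
      omega
    have hkk : k = k' := by omega
    have hll : l = l' := by
      subst hvv hμμ hkk
      omega
    rw [hvv, hμμ, hkk, hll]
  · -- surjective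
    rintro ⟨s, m⟩ hq
    rw [PBD', Finset.mem_filter, Finset.mem_product, Finset.mem_range, Finset.mem_range] at hq
    obtain ⟨⟨hsn, hmn⟩, hs1, hcond⟩ := hq
    have hsn' : s < n := hsn
    have hmn' : m < n := hmn
    have hs1' : 1 ≤ s := hs1
    have hcond' : 3 * s + 1 ≤ m ∨ m = 2 * s ∨ m = 3 * s := hcond
    clear hsn hmn hs1 hcond
    obtain ⟨w, hw⟩ : ∃ w, (m - 1) / s = w := ⟨_, rfl⟩
    obtain ⟨ρ, hρ⟩ : ∃ ρ, (m - 1) % s = ρ := ⟨_, rfl⟩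
    have hdm : s * w + ρ = m - 1 := by
      have := Nat.div_add_mod (m - 1) s
      rw [hw, hρ] at this
      exact this
    have hρs : ρ < s := by
      have := Nat.mod_lt (m - 1) (show 0 < s by omega)
      omega
    have hms : s + 1 ≤ m := by omega
    have hmul1 : 2 ≤ w → 2 * s ≤ s * w := fun h => by
      calc 2 * s = s * 2 := by ring
      _ ≤ s * w := Nat.mul_le_mul_left s h
    have hmul2 : 3 ≤ w → 3 * s ≤ s * w := fun h => by
      calc 3 * s = s * 3 := by ring
      _ ≤ s * w := Nat.mul_le_mul_left s h
    have hmul3 : w ≤ 1 → s * w ≤ s := fun h => by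
      calc s * w ≤ s * 1 := Nat.mul_le_mul_left s h
      _ = s := by ring
    have hmul4 : w ≤ 2 → s * w ≤ 2 * s := fun h => by
      calc s * w ≤ s * 2 := Nat.mul_le_mul_left s h
      _ = 2 * s := by ring
    have hw1 : 1 ≤ w := by
      rcases Nat.eq_zero_or_pos w with h0 | h1
      · rw [h0, Nat.mul_zero] at hdm
        omega
      · exact h1
    have hcase : (3 * s + 1 ≤ m ∧ 3 ≤ w) ∨ (ρ + 1 = s ∧ (w = 1 ∨ w = 2)) := by
      rcases hcond' with h | h | h
      · left
        refine ⟨h, ?_⟩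
        by_contra hc
        have := hmul4 (by omega)
        omega
      · right
        have hwe : w = 1 := by
          by_contra hc
          have := hmul1 (by omega)
          omega
        rw [hwe, Nat.mul_one] at hdm
        exact ⟨by omega, Or.inl hwe⟩
      · right
        have hwe : w = 2 := by
          rcases Nat.lt_or_ge w 2 with hc | hc
          · have := hmul3 (by omega)
            omega
          · rcases Nat.eq_or_lt_of_le hc with hc2 | hc2
            · omega
            · have := hmul2 (by omega)
              omega
        have : s * w = 2 * s := by rw [hwe]; ring
        exact ⟨by omega, Or.inr hwe⟩
    have hweq : (ρ + 1) * (w + 1) + (s - (ρ + 1)) * (w + 1 - 1) = s * w + ρ + 1 := by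
      rw [show w + 1 - 1 = w from rfl]
      have e1 : (ρ + 1) * (w + 1) = (ρ + 1) * w + (ρ + 1) := by ring
      have e2 : (s - (ρ + 1)) * w + (ρ + 1) * w = s * w := by
        rw [← Nat.add_mul, Nat.sub_add_cancel (by omega)]
      omega
    refine ⟨(w + 1, ρ + 1, s - (ρ + 1), n - m), ?_, ?_⟩
    · rw [Finset.mem_filter]
      constructor
      · apply mem_Params.2
        show 2 ≤ w + 1 ∧ 1 ≤ ρ + 1 ∧ (1 ≤ s - (ρ + 1) → 3 ≤ w + 1) ∧
          (1 ≤ s - (ρ + 1) → 1 ≤ n - m → 4 ≤ w + 1) ∧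
          (ρ + 1) * (w + 1) + (s - (ρ + 1)) * (w + 1 - 1) + (n - m) = n
        refine ⟨by omega, by omega, ?_, ?_, ?_⟩
        · intro hk
          rcases hcase with ⟨h1, h2⟩ | ⟨h1, h2⟩ <;> omega
        · intro hk hl
          rcases hcase with ⟨h1, h2⟩ | ⟨h1, h2⟩ <;> omega
        · rw [hweq]
          omega
      · show 1 ≤ n - m
        omega
    · show (ρ + 1 + (s - (ρ + 1)), (ρ + 1) * (w + 1) + (s - (ρ + 1)) * (w + 1 - 1)) = (s, m)
      rw [Prod.mk.injEq, hweq]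
      exact ⟨by omega, by omega⟩

/-! ### cards of the small families -/

open Classical in
lemma card_PA (n : ℕ) :
    ((Params n).filter (fun p => p.2.2.2 = 0 ∧ ¬ 1 ≤ p.2.2.1)).card ≤ n + 1 := by
  have h := Finset.card_le_card_of_injOn (f := fun p : ℕ × ℕ × ℕ × ℕ => p.1)
    (s := (Params n).filter (fun p => p.2.2.2 = 0 ∧ ¬ 1 ≤ p.2.2.1))
    (t := Finset.range (n+1)) ?_ ?_
  · simpa using h
  · rintro ⟨v, μ, k, l⟩ hp
    rw [Finset.mem_coe, Finset.mem_filter] at hp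
    obtain ⟨hv, hμ, hk3, hk4, heq⟩ := goodP_elim (mem_Params.1 hp.1)
    have hl : l = 0 := hp.2.1
    have hk : k = 0 := by
      have := hp.2.2
      simp only at this
      omega
    have h2 : v ≤ μ * v := Nat.le_mul_of_pos_left v (by omega)
    simp only [Finset.mem_coe, Finset.mem_range]
    subst hl hk
    omega
  · rintro ⟨v, μ, k, l⟩ hp ⟨v', μ', k', l'⟩ hp' hvv
    simp only [Finset.coe_filter, Set.mem_setOf_eq] at hp hp'
    obtain ⟨hv, hμ, hk3, hk4, heq⟩ := goodP_elim (mem_Params.1 hp.1)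
    obtain ⟨hv', hμ', hk3', hk4', heq'⟩ := goodP_elim (mem_Params.1 hp'.1)
    have hl : l = 0 := hp.2.1
    have hl' : l' = 0 := hp'.2.1
    have hk : k = 0 := by have := hp.2.2; omega
    have hk' : k' = 0 := by have := hp'.2.2; omega
    have hveq : v = v' := hvv
    subst hl hl' hk hk' hveq
    have hμeq : μ = μ' := by
      have h1 : μ * v = μ' * v := by omega
      exact Nat.eq_of_mul_eq_mul_right (by omega) h1
    rw [hμeq]

open Classical in
lemma card_PC (n : ℕ) :
    ((Params n).filter (fun p => p.2.2.2 = 0 ∧ 1 ≤ p.2.2.1)).card ≤ n + 1 := by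
  have h := Finset.card_le_card_of_injOn
    (f := fun p : ℕ × ℕ × ℕ × ℕ => p.2.1 + p.2.2.1)
    (s := (Params n).filter (fun p => p.2.2.2 = 0 ∧ 1 ≤ p.2.2.1))
    (t := Finset.range (n+1)) ?_ ?_
  · simpa using h
  · rintro ⟨v, μ, k, l⟩ hp
    rw [Finset.mem_coe, Finset.mem_filter] at hp
    obtain ⟨hv, hμ, hk3, hk4, heq⟩ := goodP_elim (mem_Params.1 hp.1)
    have hl : l = 0 := hp.2.1
    have hrep : μ * v + k * (v - 1) = (μ + k) * (v - 1) + μ := m_rep (by omega)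
    have h2 : μ + k ≤ (μ + k) * (v - 1) := Nat.le_mul_of_pos_right _ (by omega)
    simp only [Finset.mem_coe, Finset.mem_range]
    show μ + k < n + 1
    omega
  · rintro ⟨v, μ, k, l⟩ hp ⟨v', μ', k', l'⟩ hp' hss
    simp only [Finset.coe_filter, Set.mem_setOf_eq] at hp hp'
    obtain ⟨hv, hμ, hk3, hk4, heq⟩ := goodP_elim (mem_Params.1 hp.1)
    obtain ⟨hv', hμ', hk3', hk4', heq'⟩ := goodP_elim (mem_Params.1 hp'.1)
    have hl : l = 0 := hp.2.1
    have hl' : l' = 0 := hp'.2.1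
    have hseq : μ + k = μ' + k' := hss
    have hrep : μ * v + k * (v - 1) = (μ + k) * (v - 1) + μ := m_rep (by omega)
    have hrep' : μ' * v' + k' * (v' - 1) = (μ' + k') * (v' - 1) + μ' := m_rep (by omega)
    set s := μ + k with hs
    have hd1 : (n - 1) / s = v - 1 ∧ (n - 1) % s = μ - 1 := by
      have h1 : n - 1 = s * (v - 1) + (μ - 1) := by omega
      rw [h1]
      exact rep_div (by omega) (by omega)
    have hd2 : (n - 1) / s = v' - 1 ∧ (n - 1) % s = μ' - 1 := by
      have h1 : n - 1 = s * (v' - 1) + (μ' - 1) := by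
        rw [← hseq] at hrep'
        omega
      rw [h1]
      exact rep_div (by omega) (by omega)
    have hveq : v = v' := by
      have := hd1.1; have := hd2.1; omega
    have hμeq : μ = μ' := by
      have := hd1.2; have := hd2.2; omega
    have hkeq : k = k' := by omega
    rw [hveq, hμeq, hkeq, hl, hl']

/-! ### splitting Params -/

open Classical in
lemma card_split (n : ℕ) :
    (Params n).card =
      ((Params n).filter (fun p => p.2.2.2 = 0 ∧ ¬ 1 ≤ p.2.2.1)).card
      + ((Params n).filter (fun p => p.2.2.2 = 0 ∧ 1 ≤ p.2.2.1)).card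
      + ((Params n).filter (fun p => 1 ≤ p.2.2.2)).card := by
  classical
  have h1 := Finset.card_filter_add_card_filter_not
    (s := Params n) (p := fun p : ℕ × ℕ × ℕ × ℕ => 1 ≤ p.2.2.2)
  have h2 := Finset.card_filter_add_card_filter_not
    (s := (Params n).filter (fun p : ℕ × ℕ × ℕ × ℕ => ¬ 1 ≤ p.2.2.2))
    (p := fun p : ℕ × ℕ × ℕ × ℕ => 1 ≤ p.2.2.1)
  rw [Finset.filter_filter, Finset.filter_filter] at h2
  have e1 : ((Params n).filter (fun p : ℕ × ℕ × ℕ × ℕ => ¬ 1 ≤ p.2.2.2 ∧ 1 ≤ p.2.2.1))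
      = (Params n).filter (fun p => p.2.2.2 = 0 ∧ 1 ≤ p.2.2.1) := by
    apply Finset.filter_congr
    intro x _
    constructor
    · rintro ⟨h, h'⟩; exact ⟨by omega, h'⟩
    · rintro ⟨h, h'⟩; exact ⟨by omega, h'⟩
  have e2 : ((Params n).filter (fun p : ℕ × ℕ × ℕ × ℕ => ¬ 1 ≤ p.2.2.2 ∧ ¬ 1 ≤ p.2.2.1))
      = (Params n).filter (fun p => p.2.2.2 = 0 ∧ ¬ 1 ≤ p.2.2.1) := by
    apply Finset.filter_congr
    intro x _
    constructor
    · rintro ⟨h, h'⟩; exact ⟨by omega, h'⟩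
    · rintro ⟨h, h'⟩; exact ⟨by omega, h'⟩
  rw [e1, e2] at h2
  omega

/-! ### cards of the pair sets -/

open Classical in
lemma card_SL (n : ℕ) : (SL n).card = ∑ m ∈ range n, (m - 1) / 3 := by
  have hb : ((range n).sigma (fun m => Finset.Icc 1 ((m - 1) / 3))).card = (SL n).card := by
    apply Finset.card_bij (i := fun q _ => (q.2, q.1))
    · rintro ⟨m, s⟩ hq
      have hq' : m ∈ range n ∧ s ∈ Finset.Icc 1 ((m - 1) / 3) := Finset.mem_sigma.1 hq
      obtain ⟨hm, hIcc⟩ := hq'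
      rw [Finset.mem_Icc] at hIcc
      obtain ⟨hs1, hs2⟩ := hIcc
      have hmn : m < n := Finset.mem_range.1 hm
      have h3 : s * 3 ≤ m - 1 := (Nat.le_div_iff_mul_le (by omega)).1 hs2
      show (s, m) ∈ SL n
      rw [SL, Finset.mem_filter, Finset.mem_product, Finset.mem_range, Finset.mem_range]
      exact ⟨⟨by omega, by omega⟩, hs1, by omega⟩
    · rintro ⟨m, s⟩ _ ⟨m', s'⟩ _ hh
      have hh' : (s, m) = (s', m') := hh
      rw [Prod.mk.injEq] at hh'
      obtain ⟨h1, h2⟩ := hh'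
      subst h1
      subst h2
      rfl
    · rintro ⟨s, m⟩ hq
      rw [SL, Finset.mem_filter, Finset.mem_product, Finset.mem_range, Finset.mem_range] at hq
      obtain ⟨⟨hs, hm⟩, h1, h2⟩ := hq
      have h1' : 1 ≤ s := h1
      have h2' : 3 * s + 1 ≤ m := h2
      refine ⟨⟨m, s⟩, ?_, rfl⟩
      have hmem : m ∈ range n ∧ s ∈ Finset.Icc 1 ((m - 1) / 3) := by
        refine ⟨Finset.mem_range.2 hm, Finset.mem_Icc.2 ⟨h1', ?_⟩⟩
        rw [Nat.le_div_iff_mul_le (by omega)]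
        omega
      exact Finset.mem_sigma.2 hmem
  rw [← hb, Finset.card_sigma]
  congr 1
  funext m
  rw [Nat.card_Icc]
  omega

open Classical in
lemma PBD'_subset (n : ℕ) : PBD' n ⊆ SL n ∪ S2 n ∪ S3 n := by
  intro q hq
  rw [PBD', Finset.mem_filter] at hq
  obtain ⟨hmem, h1, hcond⟩ := hq
  rw [Finset.mem_union, Finset.mem_union]
  rcases hcond with h | h | h
  · exact Or.inl (Or.inl (by rw [SL, Finset.mem_filter]; exact ⟨hmem, h1, h⟩))
  · exact Or.inl (Or.inr (by rw [S2, Finset.mem_filter]; exact ⟨hmem, h⟩))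
  · exact Or.inr (by rw [S3, Finset.mem_filter]; exact ⟨hmem, h⟩)

open Classical in
lemma SL_subset (n : ℕ) : SL n ⊆ PBD' n := by
  intro q hq
  rw [SL, Finset.mem_filter] at hq
  rw [PBD', Finset.mem_filter]
  exact ⟨hq.1, hq.2.1, Or.inl hq.2.2⟩

open Classical in
lemma card_S2 (n : ℕ) : (S2 n).card ≤ n := by
  have h := Finset.card_le_card_of_injOn (f := fun q : ℕ × ℕ => q.1)
    (s := S2 n) (t := Finset.range n) ?_ ?_
  · simpa using h
  · rintro ⟨s, m⟩ hq
    rw [Finset.mem_coe, S2, Finset.mem_filter, Finset.mem_product] at hq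
    exact hq.1.1
  · rintro ⟨s, m⟩ hq ⟨s', m'⟩ hq' hss
    have h1 : m = 2 * s := by
      have h := Finset.mem_coe.1 hq
      rw [S2, Finset.mem_filter] at h
      exact h.2
    have h2 : m' = 2 * s' := by
      have h := Finset.mem_coe.1 hq'
      rw [S2, Finset.mem_filter] at h
      exact h.2
    have hs : s = s' := hss
    rw [Prod.mk.injEq]
    omega

open Classical in
lemma card_S3 (n : ℕ) : (S3 n).card ≤ n := by
  have h := Finset.card_le_card_of_injOn (f := fun q : ℕ × ℕ => q.1)
    (s := S3 n) (t := Finset.range n) ?_ ?_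
  · simpa using h
  · rintro ⟨s, m⟩ hq
    rw [Finset.mem_coe, S3, Finset.mem_filter, Finset.mem_product] at hq
    exact hq.1.1
  · rintro ⟨s, m⟩ hq ⟨s', m'⟩ hq' hss
    have h1 : m = 3 * s := by
      have h := Finset.mem_coe.1 hq
      rw [S3, Finset.mem_filter] at h
      exact h.2
    have h2 : m' = 3 * s' := by
      have h := Finset.mem_coe.1 hq'
      rw [S3, Finset.mem_filter] at h
      exact h.2
    have hs : s = s' := hss
    rw [Prod.mk.injEq]
    omega

/-! ### Gauss-type bounds -/

lemma L_upper (n : ℕ) : 6 * (∑ m ∈ range n, (m - 1) / 3) ≤ n * n := by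
  have h1 : 6 * (∑ m ∈ range n, (m - 1) / 3) = ∑ m ∈ range n, 6 * ((m - 1) / 3) :=
    Finset.mul_sum _ _ _
  have h2 : ∑ m ∈ range n, 6 * ((m - 1) / 3) ≤ ∑ m ∈ range n, 2 * m :=
    Finset.sum_le_sum (fun m _ => by omega)
  have h3 : ∑ m ∈ range n, 2 * m = n * (n - 1) := by
    rw [← Finset.sum_range_id_mul_two n, Finset.sum_mul]
    apply Finset.sum_congr rfl
    intro m _
    ring
  have h4 : n * (n - 1) ≤ n * n := Nat.mul_le_mul_left n (by omega)
  omega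

lemma L_lower (n : ℕ) : n * n ≤ 6 * (∑ m ∈ range n, (m - 1) / 3) + 7 * n := by
  have h1 : 6 * (∑ m ∈ range n, (m - 1) / 3) = ∑ m ∈ range n, 6 * ((m - 1) / 3) :=
    Finset.mul_sum _ _ _
  have h2 : ∑ m ∈ range n, 2 * m ≤ ∑ m ∈ range n, (6 * ((m - 1) / 3) + 6) :=
    Finset.sum_le_sum (fun m _ => by omega)
  have h3 : ∑ m ∈ range n, 2 * m = n * (n - 1) := by
    rw [← Finset.sum_range_id_mul_two n, Finset.sum_mul]
    apply Finset.sum_congr rfl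
    intro m _
    ring
  have h4 : ∑ m ∈ range n, (6 * ((m - 1) / 3) + 6) =
      (∑ m ∈ range n, 6 * ((m - 1) / 3)) + 6 * n := by
    rw [Finset.sum_add_distrib, Finset.sum_const, Finset.card_range, smul_eq_mul]
    omega
  have h5 : n * n ≤ n * (n - 1) + n := by
    rcases Nat.eq_zero_or_pos n with h | h
    · simp [h]
    · have : n * n = n * (n - 1) + n := by
        calc n * n = n * (n - 1 + 1) := by rw [Nat.sub_add_cancel h]
        _ = n * (n - 1) + n := by ring
      omega
  omega

/-! ### master card bounds -/

open Classical in
lemma params_card_bounds (n : ℕ) :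
    (∑ m ∈ range n, (m - 1) / 3) ≤ (Params n).card ∧
    (Params n).card ≤ (∑ m ∈ range n, (m - 1) / 3) + 4 * n + 2 := by
  have hsplit := card_split n
  have hPBD := card_PBD n
  have hPA := card_PA n
  have hPC := card_PC n
  have hSL := card_SL n
  have hsub1 : (SL n).card ≤ (PBD' n).card := Finset.card_le_card (SL_subset n)
  have hsub2 : (PBD' n).card ≤ (SL n).card + (S2 n).card + (S3 n).card := by
    calc (PBD' n).card ≤ (SL n ∪ S2 n ∪ S3 n).card := Finset.card_le_card (PBD'_subset n)
    _ ≤ (SL n ∪ S2 n).card + (S3 n).card := Finset.card_union_le _ _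
    _ ≤ (SL n).card + (S2 n).card + (S3 n).card := by
        have := Finset.card_union_le (SL n) (S2 n)
        omega
  have hS2 := card_S2 n
  have hS3 := card_S3 n
  omega


end JI

/-- The number of join-irreducible elements of the dominance lattice of
partitions of n is Θ(n²); more precisely it equals n²/6 + O(n). -/
theorem stmt17 :
    (∃ c₁ c₂ : ℝ, 0 < c₁ ∧ 0 < c₂ ∧ ∃ N : ℕ, ∀ n : ℕ, N ≤ n →
      c₁ * (n : ℝ) ^ 2 ≤ (Set.ncard {a : ℕ → ℕ | JoinIrr n a} : ℝ) ∧
      (Set.ncard {a : ℕ → ℕ | JoinIrr n a} : ℝ) ≤ c₂ * (n : ℝ) ^ 2) ∧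
    (∃ C : ℝ, ∀ n : ℕ, 1 ≤ n →
      |(Set.ncard {a : ℕ → ℕ | JoinIrr n a} : ℝ) - (n : ℝ) ^ 2 / 6| ≤ C * n) := by
  have key : ∀ n : ℕ, 1 ≤ n →
      |((Set.ncard {a : ℕ → ℕ | JoinIrr n a}) : ℝ) - (n : ℝ) ^ 2 / 6| ≤ 8 * (n : ℝ) := by
    intro n hn
    rw [JI.ncard_joinIrr]
    obtain ⟨hlo, hhi⟩ := JI.params_card_bounds n
    have hu := JI.L_upper n
    have hl := JI.L_lower n
    set L := ∑ m ∈ Finset.range n, (m - 1) / 3 with hL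
    have c1 : (6 : ℝ) * L ≤ (n : ℝ) * n := by exact_mod_cast hu
    have c2 : ((n : ℝ) * n) ≤ 6 * L + 7 * n := by exact_mod_cast hl
    have c3 : (L : ℝ) ≤ ((JI.Params n).card : ℝ) := by exact_mod_cast hlo
    have c4 : ((JI.Params n).card : ℝ) ≤ (L : ℝ) + 4 * n + 2 := by exact_mod_cast hhi
    have hn' : (1 : ℝ) ≤ n := by exact_mod_cast hn
    have e : (n : ℝ) ^ 2 = (n : ℝ) * n := pow_two _
    rw [abs_le]
    constructor
    · linarith
    · linarith
  constructor
  · refine ⟨1/12, 1, by norm_num, by norm_num, 100, ?_⟩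
    intro n hn
    have hk := key n (by omega)
    have hn' : (100 : ℝ) ≤ n := by exact_mod_cast hn
    have hq : (100 : ℝ) * n ≤ (n : ℝ) * n :=
      mul_le_mul_of_nonneg_right hn' (by positivity)
    have e : (n : ℝ) ^ 2 = (n : ℝ) * n := pow_two _
    rw [abs_le] at hk
    constructor
    · nlinarith [hk.1]
    · nlinarith [hk.2]
  · exact ⟨8, fun n hn => key n hn⟩
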